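/- Let λ̂₁ ≥ λ̂₂ ≥ ... ≥ λ̂_n > 0 be the eigenvalues of an n×n symmetric positive definite matrix K_n, let f ∈ ℝⁿ with (1/n)Σᵢ [Uᵀf]ᵢ²/λ̂ᵢ ≤ f₀² where U is the orthogonal matrix diagonalizing K_n. Then for η ∈ (0, 1/λ̂₁) and any natural number t ≥ 1, (1/n)‖(I − η K_n)^t f‖₂² ≤ f₀²/(2 e η t). -/

import Mathlib

open Matrix

lemma aux_key (a : ℝ) (ha0 : 0 < a) (ha1 : a < 1) (t : ℕ) (ht : 1 ≤ t) :
    (1 - a) ^ (2 * t) ≤ 1 / (2 * Real.exp 1 * a * t) := by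
  have htR : (1 : ℝ) ≤ (t : ℝ) := by exact_mod_cast ht
  have htpos : (0 : ℝ) < (t : ℝ) := by linarith
  have h1 : (1 - a) ^ (2 * t) ≤ Real.exp (-(2 * a * t)) := by
    calc (1 - a) ^ (2 * t) ≤ (Real.exp (-a)) ^ (2 * t) := by
          apply pow_le_pow_left₀ (by linarith)
          linarith [Real.add_one_le_exp (-a)]
      _ = Real.exp (-(2 * a * t)) := by
          rw [← Real.exp_nat_mul]; congr 1; push_cast; ring
  have h2 : 2 * Real.exp 1 * a * t ≤ Real.exp (2 * a * t) := by
    have h := Real.add_one_le_exp (2 * a * t - 1)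
    have e1 := Real.exp_pos 1
    calc 2 * Real.exp 1 * a * t = Real.exp 1 * (2 * a * t - 1 + 1) := by ring
      _ ≤ Real.exp 1 * Real.exp (2 * a * t - 1) := by nlinarith
      _ = Real.exp (2 * a * t) := by rw [← Real.exp_add]; ring_nf
  have hpos : (0 : ℝ) < 2 * Real.exp 1 * a * t :=
    mul_pos (mul_pos (mul_pos two_pos (Real.exp_pos 1)) ha0) htpos
  rw [Real.exp_neg] at h1
  calc (1 - a) ^ (2 * t) ≤ (Real.exp (2 * a * t))⁻¹ := h1
    _ ≤ 1 / (2 * Real.exp 1 * a * t) := by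
        rw [one_div]
        exact inv_anti₀ hpos h2

lemma aux_conj_pow {n : ℕ} (U D : Matrix (Fin n) (Fin n) ℝ)
    (h1 : U * Uᵀ = 1) (h2 : Uᵀ * U = 1) (t : ℕ) :
    (U * D * Uᵀ) ^ t = U * D ^ t * Uᵀ := by
  induction t with
  | zero => simp [h1]
  | succ k ih =>
    rw [pow_succ, ih, pow_succ]
    calc U * D ^ k * Uᵀ * (U * D * Uᵀ)
        = U * D ^ k * (Uᵀ * U) * D * Uᵀ := by noncomm_ring
      _ = U * (D ^ k * D) * Uᵀ := by rw [h2]; noncomm_ring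

theorem stmt_9 (n : ℕ) (hn : 0 < n)
    (U : Matrix (Fin n) (Fin n) ℝ) (hU : U ∈ Matrix.orthogonalGroup (Fin n) ℝ)
    (lamhat : Fin n → ℝ) (hpos : ∀ i, 0 < lamhat i)
    (hsorted : ∀ i j : Fin n, i ≤ j → lamhat j ≤ lamhat i)
    (Kn : Matrix (Fin n) (Fin n) ℝ)
    (hKn : Kn = U * Matrix.diagonal lamhat * Uᵀ)
    (f : Fin n → ℝ) (f₀ : ℝ)
    (hf : (1 / (n : ℝ)) * ∑ i, ((Uᵀ *ᵥ f) i) ^ 2 / lamhat i ≤ f₀ ^ 2)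
    (η : ℝ) (hη0 : 0 < η) (hη1 : η < 1 / lamhat ⟨0, hn⟩)
    (t : ℕ) (ht : 1 ≤ t) :
    (1 / (n : ℝ)) * ∑ i, (((1 - η • Kn) ^ t *ᵥ f) i) ^ 2 ≤
      f₀ ^ 2 / (2 * Real.exp 1 * η * t) := by
  have htR : (1 : ℝ) ≤ (t : ℝ) := by exact_mod_cast ht
  have htpos : (0 : ℝ) < (t : ℝ) := by linarith
  -- orthogonality
  have hUU : U * Uᵀ = 1 := by
    have := (Matrix.mem_orthogonalGroup_iff (Fin n) ℝ).mp hU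
    simpa [Matrix.star_eq_conjTranspose] using this
  have hUtU : Uᵀ * U = 1 := by
    have := (Matrix.mem_orthogonalGroup_iff' (Fin n) ℝ).mp hU
    simpa [Matrix.star_eq_conjTranspose] using this
  -- each ηλᵢ ∈ (0,1)
  have hel : ∀ i, η * lamhat i < 1 := by
    intro i
    have h0i : lamhat i ≤ lamhat ⟨0, hn⟩ := hsorted ⟨0, hn⟩ i (by simp [Fin.le_def])
    have h0pos := hpos ⟨0, hn⟩
    have h01 : η * lamhat ⟨0, hn⟩ < 1 := by
      rw [div_eq_inv_mul, mul_one] at hη1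
      calc η * lamhat ⟨0, hn⟩ < (lamhat ⟨0, hn⟩)⁻¹ * lamhat ⟨0, hn⟩ :=
            mul_lt_mul_of_pos_right hη1 h0pos
        _ = 1 := inv_mul_cancel₀ (ne_of_gt h0pos)
    nlinarith [hpos i]
  -- rewrite the matrix
  set D : Matrix (Fin n) (Fin n) ℝ := Matrix.diagonal (fun i => 1 - η * lamhat i) with hD
  have hdiag : (1 : Matrix (Fin n) (Fin n) ℝ) - η • Matrix.diagonal lamhat = D := by
    rw [hD]
    ext i j
    by_cases h : i = j <;>
      simp [Matrix.diagonal_apply, h, Matrix.one_apply, Matrix.sub_apply]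
  have hmat : (1 - η • Kn) = U * D * Uᵀ := by
    have hone : (1 : Matrix (Fin n) (Fin n) ℝ) = U * 1 * Uᵀ := by rw [mul_one, hUU]
    calc (1 : Matrix (Fin n) (Fin n) ℝ) - η • Kn
        = U * 1 * Uᵀ - U * (η • Matrix.diagonal lamhat) * Uᵀ := by
          rw [← hone, hKn, Matrix.mul_smul, Matrix.smul_mul]
      _ = U * (1 - η • Matrix.diagonal lamhat) * Uᵀ := by
          rw [Matrix.mul_sub, Matrix.sub_mul]
      _ = U * D * Uᵀ := by rw [hdiag]
  -- power
  have hpow : (1 - η • Kn) ^ t = U * D ^ t * Uᵀ := by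
    rw [hmat]; exact aux_conj_pow U D hUU hUtU t
  have hDt : D ^ t = Matrix.diagonal (fun i => (1 - η * lamhat i) ^ t) := by
    rw [hD, Matrix.diagonal_pow]; congr 1
  -- norm preservation under U: sum of squares
  set g : Fin n → ℝ := Uᵀ *ᵥ f with hg
  have hsq : ∀ w : Fin n → ℝ, ∑ i, (w i) ^ 2 = w ⬝ᵥ w := by
    intro w; simp [dotProduct, sq]
  have hsum : ∑ i, (((1 - η • Kn) ^ t *ᵥ f) i) ^ 2
      = ∑ i, ((1 - η * lamhat i) ^ (2 * t)) * (g i) ^ 2 := by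
    have hv : ((1 - η • Kn) ^ t) *ᵥ f = U *ᵥ (D ^ t *ᵥ g) := by
      rw [hpow, hg, ← Matrix.mulVec_mulVec, ← Matrix.mulVec_mulVec]
    rw [hv]
    have horth : ∑ i, ((U *ᵥ (D ^ t *ᵥ g)) i) ^ 2 = ∑ i, ((D ^ t *ᵥ g) i) ^ 2 := by
      set v := D ^ t *ᵥ g
      rw [hsq, hsq, Matrix.dotProduct_mulVec, Matrix.vecMul_mulVec, hUtU,
        Matrix.vecMul_one]
    rw [horth]
    apply Finset.sum_congr rfl
    intro i _
    rw [hDt, Matrix.mulVec_diagonal, mul_pow, ← pow_mul, mul_comm t 2]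
  rw [hsum]
  -- termwise bound
  have hterm : ∀ i, ((1 - η * lamhat i) ^ (2 * t)) * (g i) ^ 2
      ≤ (1 / (2 * Real.exp 1 * η * t)) * ((g i) ^ 2 / lamhat i) := by
    intro i
    have hkey := aux_key (η * lamhat i) (mul_pos hη0 (hpos i)) (hel i) t ht
    have hlam := hpos i
    have h2 : (1 : ℝ) / (2 * Real.exp 1 * (η * lamhat i) * t)
        = (1 / (2 * Real.exp 1 * η * t)) * (1 / lamhat i) := by
      field_simp
    calc ((1 - η * lamhat i) ^ (2 * t)) * (g i) ^ 2
        ≤ (1 / (2 * Real.exp 1 * (η * lamhat i) * t)) * (g i) ^ 2 :=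
          mul_le_mul_of_nonneg_right hkey (sq_nonneg _)
      _ = (1 / (2 * Real.exp 1 * η * t)) * ((g i) ^ 2 / lamhat i) := by
          rw [h2]; ring
  have hC : (0 : ℝ) < 2 * Real.exp 1 * η * t :=
    mul_pos (mul_pos (mul_pos two_pos (Real.exp_pos 1)) hη0) htpos
  have hnR : (0 : ℝ) < (n : ℝ) := by exact_mod_cast hn
  calc (1 / (n : ℝ)) * ∑ i, ((1 - η * lamhat i) ^ (2 * t)) * (g i) ^ 2
      ≤ (1 / (n : ℝ)) * ∑ i, (1 / (2 * Real.exp 1 * η * t)) * ((g i) ^ 2 / lamhat i) := by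
        apply mul_le_mul_of_nonneg_left _ (by positivity)
        exact Finset.sum_le_sum fun i _ => hterm i
    _ = (1 / (2 * Real.exp 1 * η * t)) * ((1 / (n : ℝ)) * ∑ i, (g i) ^ 2 / lamhat i) := by
        rw [← Finset.mul_sum]; ring
    _ ≤ (1 / (2 * Real.exp 1 * η * t)) * f₀ ^ 2 := by
        apply mul_le_mul_of_nonneg_left _ (by positivity)
        exact hf
    _ = f₀ ^ 2 / (2 * Real.exp 1 * η * t) := by ring
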